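/- Let F be a field of characteristic 2 and L/F an extension of degree 4 with a² ∈ F for all a ∈ L. Let (1, i, j, k = ij) be a basis of L over F and p = 1⊗i + i⊗1, q = 1⊗j + j⊗1, r = pq in L ⊗_F L. Then pr = 0, qr = 0, r² = 0, and the annihilator of the maximal ideal Π = ker π in L ⊗_F L equals the one-dimensional subspace L·r. -/

import Mathlib

open TensorProduct

set_option maxHeartbeats 1000000
theorem stmt9 (F L : Type*) [Field F] [Field L] [Algebra F L] [CharP F 2]
    (hdim : Module.finrank F L = 4)
    (hsq : ∀ a : L, ∃ f : F, algebraMap F L f = a ^ 2) (π : (L ⊗[F] L) →ₐ[L] L) (hπ : ∀ x y : L, π (x ⊗ₜ[F] y) = x * y) (i j : L) (hij : LinearIndependent F ![1, i, j])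
    (p q r : L ⊗[F] L)
    (hp : p = 1 ⊗ₜ[F] i + i ⊗ₜ[F] 1) (hq : q = 1 ⊗ₜ[F] j + j ⊗ₜ[F] 1)
    (hr : r = p * q) :
    p * r = 0 ∧ q * r = 0 ∧ r ^ 2 = 0 ∧
    (∀ g : L ⊗[F] L, (∀ z : L ⊗[F] L, π z = 0 → g * z = 0) ↔ ∃ c : L, g = c • r) := by
  -- characteristic two facts
  have h2F : (2 : F) = 0 := by
    have := CharP.cast_eq_zero F 2; exact_mod_cast this
  have h2 : ∀ x : L, x + x = 0 := fun x => by rw [← two_smul F x, h2F, zero_smul]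
  have h2T : ∀ x : L ⊗[F] L, x + x = 0 := fun x => by rw [← two_smul F x, h2F, zero_smul]
  have hsq2 : ∀ x y : L, (x + y)^2 = x^2 + y^2 := fun x y => by linear_combination h2 (x*y)
  -- squares are central scalars
  have key : ∀ a x : L, (1:L) ⊗ₜ[F] (a*a*x) = (a*a) • ((1:L) ⊗ₜ[F] x) := by
    intro a x
    obtain ⟨f, hf⟩ := hsq a
    have hf' : algebraMap F L f = a*a := by rw [hf]; ring
    rw [← hf', ← Algebra.smul_def, tmul_smul, algebraMap_smul]
  have keyc1 : ∀ a : L, (1:L) ⊗ₜ[F] (a*a) = (a*a) • ((1:L) ⊗ₜ[F] (1:L)) := fun a => by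
    have := key a 1; rwa [mul_one] at this
  have hsmul : ∀ x y : L, x • ((1:L) ⊗ₜ[F] y) = x ⊗ₜ[F] y := fun x y => by
    rw [smul_tmul', smul_eq_mul, mul_one]
  have key1 : ∀ a : L, ((1:L) ⊗ₜ[F] (a*a) : L ⊗[F] L) = (a*a) ⊗ₜ[F] (1:L) := fun a => by
    rw [keyc1 a, hsmul]
  -- squares of p and q vanish
  have hp2 : p * p = 0 := by
    rw [hp]
    simp only [add_mul, mul_add, Algebra.TensorProduct.tmul_mul_tmul, one_mul, mul_one]
    rw [key1 i]
    linear_combination h2T ((i*i) ⊗ₜ[F] (1:L)) + h2T (i ⊗ₜ[F] i)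
  have hq2 : q * q = 0 := by
    rw [hq]
    simp only [add_mul, mul_add, Algebra.TensorProduct.tmul_mul_tmul, one_mul, mul_one]
    rw [key1 j]
    linear_combination h2T ((j*j) ⊗ₜ[F] (1:L)) + h2T (j ⊗ₜ[F] j)
  have hpr : p * r = 0 := by rw [hr, ← mul_assoc, hp2, zero_mul]
  have hqr : q * r = 0 := by
    rw [hr, show q * (p * q) = p * (q * q) from by ring, hq2, mul_zero]
  have hr2 : r ^ 2 = 0 := by
    rw [hr, show (p * q)^2 = (p * p) * (q * q) from by ring, hp2, zero_mul]
  -- values of π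
  have hπp : π p = 0 := by rw [hp, map_add, hπ, hπ, one_mul, mul_one]; exact h2 i
  have hπq : π q = 0 := by rw [hq, map_add, hπ, hπ, one_mul, mul_one]; exact h2 j
  -- linear independence of 1, i, j, ij
  have hw : LinearIndependent F ![1, i, j, i*j] := by
    have hk_not : i*j ∉ Submodule.span F (Set.range ![1,i,j]) := by
      intro hmem
      obtain ⟨t, ht⟩ := (Submodule.mem_span_range_iff_exists_fun F).mp hmem
      rw [Fin.sum_univ_three] at ht
      simp only [Matrix.cons_val_zero, Matrix.cons_val_one, Matrix.head_cons,
        Matrix.cons_val_two, Matrix.tail_cons] at ht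
      have ht' : algebraMap F L (t 0) + algebraMap F L (t 1) * i + algebraMap F L (t 2) * j
          = i * j := by
        rw [← ht]; simp [Algebra.smul_def]
      obtain ⟨fi, hfi⟩ := hsq i
      have hrel : ∑ m, (![t 0 * t 2 + t 1 * fi, t 0 + t 1 * t 2, fi + t 2^2]) m • ![1,i,j] m
          = 0 := by
        rw [Fin.sum_univ_three]
        simp only [Matrix.cons_val_zero, Matrix.cons_val_one, Matrix.head_cons,
          Matrix.cons_val_two, Matrix.tail_cons, Algebra.smul_def, map_add, map_mul,
          map_pow, mul_one]
        rw [hfi]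
        linear_combination (i + algebraMap F L (t 2)) * ht' + h2 (i^2 * j)
      have h3 := Fintype.linearIndependent_iff.mp hij _ hrel
      have e2' : fi + t 2 ^ 2 = 0 := by simpa using h3 2
      have hiC : i = algebraMap F L (t 2) := by
        have hz : (i + algebraMap F L (t 2))^2 = 0 := by
          rw [hsq2]
          rw [← hfi, ← map_pow, ← map_add, e2', map_zero]
        have h0 : i + algebraMap F L (t 2) = 0 :=
          pow_eq_zero_iff (two_ne_zero) |>.mp hz
        linear_combination h0 - h2 (algebraMap F L (t 2))
      have hrel2 : ∑ m, (![t 2, -1, 0] : Fin 3 → F) m • ![1,i,j] m = 0 := by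
        rw [Fin.sum_univ_three]
        simp [Algebra.smul_def, ← hiC]
      have := Fintype.linearIndependent_iff.mp hij _ hrel2 1
      simp at this
    have hcons : LinearIndependent F (Fin.cons (i*j) ![1,i,j]) :=
      linearIndependent_fin_cons.mpr ⟨hij, hk_not⟩
    have hσ : Function.Injective (![1,2,3,0] : Fin 4 → Fin 4) := by decide
    have hcomp := hcons.comp _ hσ
    have heq : (Fin.cons (i*j) ![1,i,j] : Fin 4 → L) ∘ ![1,2,3,0] = ![1,i,j,i*j] := by
      funext m; fin_cases m <;> rfl
    rwa [heq] at hcomp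
  -- the L-basis of L ⊗ L
  let b : Module.Basis (Fin 4) F L := basisOfLinearIndependentOfCardEqFinrank hw (by simp [hdim])
  have hb : ⇑b = ![1,i,j,i*j] := coe_basisOfLinearIndependentOfCardEqFinrank ..
  let e : Module.Basis (Fin 4) L (L ⊗[F] L) := b.baseChange L
  have he0 : e 0 = (1:L) ⊗ₜ[F] (1:L) := by
    rw [show e 0 = 1 ⊗ₜ[F] b 0 from Module.Basis.baseChange_apply ..,
      show b 0 = 1 from by rw [hb]; rfl]
  have he1 : e 1 = (1:L) ⊗ₜ[F] i := by
    rw [show e 1 = 1 ⊗ₜ[F] b 1 from Module.Basis.baseChange_apply ..,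
      show b 1 = i from by rw [hb]; rfl]
  have he2 : e 2 = (1:L) ⊗ₜ[F] j := by
    rw [show e 2 = 1 ⊗ₜ[F] b 2 from Module.Basis.baseChange_apply ..,
      show b 2 = j from by rw [hb]; rfl]
  have he3 : e 3 = (1:L) ⊗ₜ[F] (i*j) := by
    rw [show e 3 = 1 ⊗ₜ[F] b 3 from Module.Basis.baseChange_apply ..,
      show b 3 = i*j from by rw [hb]; rfl]
  have hlin : ∀ A B C D : L,
      A • ((1:L) ⊗ₜ[F] (1:L)) + B • ((1:L) ⊗ₜ[F] i) + C • ((1:L) ⊗ₜ[F] j)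
        + D • ((1:L) ⊗ₜ[F] (i*j)) = 0 →
      A = 0 ∧ B = 0 ∧ C = 0 ∧ D = 0 := by
    intro A B C D h
    have h4 := Fintype.linearIndependent_iff.mp e.linearIndependent ![A,B,C,D] (by
      rw [Fin.sum_univ_four, he0, he1, he2, he3]
      simpa using h)
    exact ⟨h4 0, h4 1, h4 2, h4 3⟩
  have hdec : ∀ g : L ⊗[F] L, ∃ A B C D : L,
      g = A • ((1:L) ⊗ₜ[F] (1:L)) + B • ((1:L) ⊗ₜ[F] i) + C • ((1:L) ⊗ₜ[F] j)
        + D • ((1:L) ⊗ₜ[F] (i*j)) := by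
    intro g
    refine ⟨e.repr g 0, e.repr g 1, e.repr g 2, e.repr g 3, ?_⟩
    have := e.sum_repr g
    rw [Fin.sum_univ_four, he0, he1, he2, he3] at this
    exact this.symm
  -- multiplication basics
  have hE : ∀ x y : L, ((1:L) ⊗ₜ[F] x) * ((1:L) ⊗ₜ[F] y) = (1:L) ⊗ₜ[F] (x*y) := by
    intro x y
    rw [Algebra.TensorProduct.tmul_mul_tmul, one_mul]
  have hone : (1 : L ⊗[F] L) = (1:L) ⊗ₜ[F] (1:L) := Algebra.TensorProduct.one_def
  have hE1r : ∀ x : L ⊗[F] L, x * ((1:L) ⊗ₜ[F] (1:L)) = x := fun x => by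
    rw [← hone, mul_one]
  have hpE : p = (1:L) ⊗ₜ[F] i + i • ((1:L) ⊗ₜ[F] (1:L)) := by rw [hp, hsmul]
  have hqE : q = (1:L) ⊗ₜ[F] j + j • ((1:L) ⊗ₜ[F] (1:L)) := by rw [hq, hsmul]
  -- multiplication table with p
  have m1p : ((1:L) ⊗ₜ[F] (1:L)) * p = (1:L) ⊗ₜ[F] i + i • ((1:L) ⊗ₜ[F] (1:L)) := by
    rw [← hone, one_mul]; exact hpE
  have m2p : ((1:L) ⊗ₜ[F] i) * p = (i*i) • ((1:L) ⊗ₜ[F] (1:L)) + i • ((1:L) ⊗ₜ[F] i) := by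
    rw [hpE, mul_add, hE i i, mul_smul_comm, hE1r, keyc1 i]
  have m3p : ((1:L) ⊗ₜ[F] j) * p = (1:L) ⊗ₜ[F] (i*j) + i • ((1:L) ⊗ₜ[F] j) := by
    rw [hpE, mul_add, hE j i, mul_comm j i, mul_smul_comm, hE1r]
  have m0p : ((1:L) ⊗ₜ[F] (i*j)) * p
      = (i*i) • ((1:L) ⊗ₜ[F] j) + i • ((1:L) ⊗ₜ[F] (i*j)) := by
    rw [hpE, mul_add, hE (i*j) i, show i*j*i = i*i*j from by ring, key i j,
      mul_smul_comm, hE1r]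
  -- multiplication table with q
  have m1q : ((1:L) ⊗ₜ[F] (1:L)) * q = (1:L) ⊗ₜ[F] j + j • ((1:L) ⊗ₜ[F] (1:L)) := by
    rw [← hone, one_mul]; exact hqE
  have m2q : ((1:L) ⊗ₜ[F] i) * q = (1:L) ⊗ₜ[F] (i*j) + j • ((1:L) ⊗ₜ[F] i) := by
    rw [hqE, mul_add, hE i j, mul_smul_comm, hE1r]
  have m3q : ((1:L) ⊗ₜ[F] j) * q = (j*j) • ((1:L) ⊗ₜ[F] (1:L)) + j • ((1:L) ⊗ₜ[F] j) := by
    rw [hqE, mul_add, hE j j, mul_smul_comm, hE1r, keyc1 j]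
  have m0q : ((1:L) ⊗ₜ[F] (i*j)) * q
      = (j*j) • ((1:L) ⊗ₜ[F] i) + j • ((1:L) ⊗ₜ[F] (i*j)) := by
    rw [hqE, mul_add, hE (i*j) j, show i*j*j = j*j*i from by ring, key j i,
      mul_smul_comm, hE1r]
  -- expansion of r
  have hrE : r = (i*j) • ((1:L) ⊗ₜ[F] (1:L)) + j • ((1:L) ⊗ₜ[F] i)
      + i • ((1:L) ⊗ₜ[F] j) + (1:L) ⊗ₜ[F] (i*j) := by
    rw [hr, hpE, hqE]
    simp only [add_mul, mul_add, smul_mul_assoc, mul_smul_comm, smul_smul, hE,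
      mul_one, one_mul]
    module
  -- r times basis elements
  have hE2p : ((1:L) ⊗ₜ[F] i) * p = i • p := by rw [m2p, hpE]; module
  have hE3q : ((1:L) ⊗ₜ[F] j) * q = j • q := by rw [m3q, hqE]; module
  have hrE1 : r * ((1:L) ⊗ₜ[F] (1:L)) = r := hE1r r
  have hrE2 : r * ((1:L) ⊗ₜ[F] i) = i • r := by
    rw [hr, mul_right_comm, mul_comm p ((1:L) ⊗ₜ[F] i), hE2p, smul_mul_assoc]
  have hrE3 : r * ((1:L) ⊗ₜ[F] j) = j • r := by
    rw [hr, mul_assoc, mul_comm q ((1:L) ⊗ₜ[F] j), hE3q, mul_smul_comm]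
  have hrE0 : r * ((1:L) ⊗ₜ[F] (i*j)) = (i*j) • r := by
    rw [← hE i j, ← mul_assoc, hrE2, smul_mul_assoc, hrE3, smul_smul]
  -- π on basis elements
  have πE1 : π ((1:L) ⊗ₜ[F] (1:L)) = 1 := by rw [hπ, one_mul]
  have πE2 : π ((1:L) ⊗ₜ[F] i) = i := by rw [hπ, one_mul]
  have πE3 : π ((1:L) ⊗ₜ[F] j) = j := by rw [hπ, one_mul]
  have πE0 : π ((1:L) ⊗ₜ[F] (i*j)) = i*j := by rw [hπ, one_mul]
  -- the key identity:  r * z = π z • r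
  have hrz : ∀ z : L ⊗[F] L, r * z = π z • r := by
    intro z
    obtain ⟨A, B, C, D, hz⟩ := hdec z
    rw [hz, mul_add, mul_add, mul_add, mul_smul_comm, mul_smul_comm, mul_smul_comm,
      mul_smul_comm, hrE1, hrE2, hrE3, hrE0, map_add, map_add, map_add, map_smul,
      map_smul, map_smul, map_smul, πE1, πE2, πE3, πE0]
    simp only [smul_eq_mul]
    module
  refine ⟨hpr, hqr, hr2, ?_⟩
  intro g
  constructor
  · -- annihilator → multiple of r
    intro hann
    obtain ⟨A, B, C, D, hg⟩ := hdec g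
    have hgp : g * p = 0 := hann p hπp
    have hgq : g * q = 0 := hann q hπq
    have hgp' : g * p = (A*i + B*(i*i)) • ((1:L) ⊗ₜ[F] (1:L)) + (A + B*i) • ((1:L) ⊗ₜ[F] i)
        + (C*i + D*(i*i)) • ((1:L) ⊗ₜ[F] j) + (C + D*i) • ((1:L) ⊗ₜ[F] (i*j)) := by
      rw [hg]
      simp only [add_mul, smul_mul_assoc, m1p, m2p, m3p, m0p]
      module
    have hgq' : g * q = (A*j + C*(j*j)) • ((1:L) ⊗ₜ[F] (1:L)) + (B*j + D*(j*j)) • ((1:L) ⊗ₜ[F] i)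
        + (A + C*j) • ((1:L) ⊗ₜ[F] j) + (B + D*j) • ((1:L) ⊗ₜ[F] (i*j)) := by
      rw [hg]
      simp only [add_mul, smul_mul_assoc, m1q, m2q, m3q, m0q]
      module
    rw [hgp'] at hgp
    rw [hgq'] at hgq
    obtain ⟨-, hP2, -, hP4⟩ := hlin _ _ _ _ hgp
    obtain ⟨-, -, hQ3, hQ4⟩ := hlin _ _ _ _ hgq
    have hB : B = D*j := by linear_combination hQ4 - h2 (D*j)
    have hC : C = D*i := by linear_combination hP4 - h2 (D*i)
    have hA : A = D*(i*j) := by linear_combination hP2 - i * hQ4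
    refine ⟨D, ?_⟩
    rw [hg, hrE, hA, hB, hC]
    module
  · -- multiples of r annihilate
    rintro ⟨c, rfl⟩ z hz
    rw [smul_mul_assoc, hrz, hz, zero_smul, smul_zero]
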